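/- Let ρ be a linear lifting for L∞([0,1],Σ,μ), let c ∈ (0,1) be such that ρ(χ_{(x,y)})(c) = 1 for all reals 0 ≤ x < c < y ≤ 1. Let ⟨b_{0n} : n < ω⟩ be a strictly increasing sequence of rationals in (0,1) converging to c and ⟨b_{1n} : n < ω⟩ a strictly decreasing sequence of rationals in (0,1) converging to c. For a strictly increasing function f: ℕ → ℕ and k, m ∈ ℕ, set A^k_m(f) = ∪_{j<2} ∪_{ℓ ≥ k} (b_{j,f(4ℓ+m)}, b_{j,f(4ℓ+m+1)}), where for two reals a ≠ b, (a,b) denotes the open interval between them regardless of order. Let f*: ℕ → ℕ be strictly increasing, let f*₃(ℓ) = f*(3ℓ), and suppose that for some m < 4, ρ(χ_{A^0_m(f*₃)})(c) ≤ 1/4. Then for every m̄ < 4 and every k ∈ ℕ, there is a strictly increasing function g: ℕ → ℕ such that g(i) = i for all i < k and ρ(χ_{A^0_{m̄}(f* ∘ g)})(c) ≥ 3/4. -/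

import Mathlib

open MeasureTheory

/-- The unit interval `[0,1]` with its Borel σ-algebra and Lebesgue measure (`volume`). -/
abbrev I01 := Set.Icc (0:ℝ) 1

/-- `f` belongs to L∞: it is measurable (Borel) and bounded. -/
def MemLinf {Y : Type*} [MeasurableSpace Y] (f : Y → ℝ) : Prop :=
  Measurable f ∧ ∃ M : ℝ, ∀ y, |f y| ≤ M

/-- `ρ` is a linear lifting for L∞. -/
structure IsLinearLifting {Y : Type*} [MeasurableSpace Y] (ν : Measure Y)
    (ρ : (Y → ℝ) → (Y → ℝ)) : Prop where
  mem : ∀ f, MemLinf f → MemLinf (ρ f)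
  congr_ae : ∀ f g, MemLinf f → MemLinf g → f =ᵐ[ν] g → ρ f = ρ g
  ae_eq : ∀ f, MemLinf f → ρ f =ᵐ[ν] f
  linear : ∀ f g, MemLinf f → MemLinf g → ∀ x y : ℝ,
    ρ (fun t => x * f t + y * g t) = fun t => x * ρ f t + y * ρ g t
  map_one : ρ (fun _ => (1:ℝ)) = fun _ => (1:ℝ)
  nonneg : ∀ f, MemLinf f → (∀ᵐ y ∂ν, 0 ≤ f y) → ∀ y, 0 ≤ ρ f y

/-- The open subinterval `(a,b)` of `[0,1]`. -/
def intOO (a b : ℝ) : Set I01 := {x : I01 | a < (x : ℝ) ∧ (x : ℝ) < b}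

/-- The characteristic function of a subset of `[0,1]`. -/
noncomputable def chi (S : Set I01) : I01 → ℝ := S.indicator fun _ => 1

/-- `c` is `ρ`-correct: for every pair of rationals `0 ≤ a < b ≤ 1`,
`ρ(χ_(a,b))(c) = χ_(a,b)(c)`. -/
def RhoCorrect (ρ : (I01 → ℝ) → (I01 → ℝ)) (c : I01) : Prop :=
  ∀ a b : ℚ, 0 ≤ a → a < b → (b : ℝ) ≤ 1 →
    ρ (chi (intOO a b)) c = chi (intOO a b) c

/-- `A^k_m(f) = ⋃_{j<2} ⋃_{ℓ ≥ k} (b_{j,f(4ℓ+m)}, b_{j,f(4ℓ+m+1)})`, where for reals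
`a ≠ b`, `(a,b)` denotes the open interval between them regardless of order (`Set.uIoo`). -/
def Ak (b : Fin 2 → ℕ → ℚ) (k m : ℕ) (f : ℕ → ℕ) : Set I01 :=
  ⋃ j : Fin 2, ⋃ ℓ : ℕ, ⋃ (_ : k ≤ ℓ),
    {x : I01 | (x : ℝ) ∈ Set.uIoo ((b j (f (4*ℓ+m)) : ℝ)) ((b j (f (4*ℓ+m+1)) : ℝ))}

lemma null_of_countable {E : Set I01} (hE : E.Countable) : (volume : Measure I01) E = 0 := by
  have h1 : (volume : Measure I01) = Measure.comap Subtype.val volume := unitInterval.volume_def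
  have h2 : MeasurableEmbedding (Subtype.val : I01 → ℝ) :=
    MeasurableEmbedding.subtype_coe measurableSet_Icc
  rw [h1, h2.comap_apply]
  exact (hE.image _).measure_zero _

lemma memLinf_chi {S : Set I01} (hS : MeasurableSet S) : MemLinf (chi S) := by
  refine ⟨measurable_const.indicator hS, 1, fun y => ?_⟩
  by_cases h : y ∈ S <;> simp [chi, Set.indicator, h]

lemma chi_nonneg (S : Set I01) (y : I01) : 0 ≤ chi S y := by
  by_cases h : y ∈ S <;> simp [chi, Set.indicator, h]

lemma chi_le_one (S : Set I01) (y : I01) : chi S y ≤ 1 := by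
  by_cases h : y ∈ S <;> simp [chi, Set.indicator, h]

lemma measurableSet_Ak (b : Fin 2 → ℕ → ℚ) (k m : ℕ) (f : ℕ → ℕ) :
    MeasurableSet (Ak b k m f) := by
  refine MeasurableSet.iUnion fun j => MeasurableSet.iUnion fun ℓ =>
    MeasurableSet.iUnion fun _ => ?_
  exact measurable_subtype_coe (by rw [Set.uIoo]; exact measurableSet_Ioo)

lemma measurableSet_intOO (a b : ℝ) : MeasurableSet (intOO a b) :=
  measurable_subtype_coe (measurableSet_Ioo : MeasurableSet (Set.Ioo a b))

lemma rho_mono {ρ : (I01 → ℝ) → (I01 → ℝ)} (hρ : IsLinearLifting volume ρ)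
    (f g : I01 → ℝ) (hf : MemLinf f) (hg : MemLinf g)
    (h : ∀ᵐ y ∂(volume : Measure I01), f y ≤ g y) (y : I01) : ρ f y ≤ ρ g y := by
  have hd : MemLinf (fun t => (1:ℝ) * g t + (-1) * f t) := by
    obtain ⟨Mf, hMf⟩ := hf.2; obtain ⟨Mg, hMg⟩ := hg.2
    refine ⟨(measurable_const.mul hg.1).add (measurable_const.mul hf.1), Mg + Mf, fun t => ?_⟩
    have := abs_sub (g t) (f t)
    have h1 := hMf t; have h2 := hMg t
    have : |g t - f t| ≤ |g t| + |f t| := abs_sub _ _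
    calc |(1:ℝ) * g t + (-1) * f t| = |g t - f t| := by ring_nf
      _ ≤ |g t| + |f t| := abs_sub _ _
      _ ≤ Mg + Mf := add_le_add h2 h1
  have hnn := hρ.nonneg _ hd (h.mono fun t ht => by linarith) y
  rw [hρ.linear g f hg hf 1 (-1)] at hnn
  simp only at hnn; linarith

lemma exists_sandwich (e : ℕ → ℝ) (he : StrictMono e) (c x : ℝ)
    (hlim : Filter.Tendsto e Filter.atTop (nhds c))
    (hx : ∀ n, e n ≠ x) (n0 : ℕ) (h1 : e n0 < x) (h2 : x < c) :
    ∃ n, n0 ≤ n ∧ e n < x ∧ x < e (n+1) := by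
  classical
  have hev : ∀ᶠ n in Filter.atTop, x < e n := hlim.eventually (eventually_gt_nhds h2)
  have hex : ∃ n, x ≤ e n := by obtain ⟨N, hN⟩ := hev.exists; exact ⟨N, hN.le⟩
  set n1 := Nat.find hex with hn1
  have hspec : x ≤ e n1 := Nat.find_spec hex
  have hn0 : n0 < n1 := by
    by_contra hle
    push_neg at hle
    have : e n1 ≤ e n0 := he.monotone hle
    linarith
  refine ⟨n1 - 1, by omega, ?_, ?_⟩
  · have := Nat.find_min hex (m := n1 - 1) (by omega)
    push_neg at this; exact this
  · have heq : n1 - 1 + 1 = n1 := by omega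
    rw [heq]
    exact lt_of_le_of_ne hspec (fun h => hx n1 h.symm)

def gseq (t : ℕ) : ℕ := 12 * (t / 4) + (if t % 4 = 0 then 0 else t % 4 + 8)

lemma gseq_strictMono : StrictMono gseq := by
  apply strictMono_nat_of_lt_succ
  intro t
  unfold gseq
  split_ifs <;> omega

lemma gseq_4 (s : ℕ) : gseq (4*s) = 12*s := by unfold gseq; split_ifs <;> omega
lemma gseq_41 (s : ℕ) : gseq (4*s+1) = 12*s+9 := by unfold gseq; split_ifs <;> omega

def gfun (N0 base : ℕ) (n : ℕ) : ℕ := if n < N0 then n else base + gseq (n - N0)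

lemma gfun_strictMono (N0 base : ℕ) (h : N0 ≤ base) : StrictMono (gfun N0 base) := by
  apply strictMono_nat_of_lt_succ
  intro n
  unfold gfun
  split_ifs with h1 h2
  · omega
  · have : gseq (n + 1 - N0) = 0 ∨ 0 < gseq (n+1-N0) := by omega
    omega
  · omega
  · have := gseq_strictMono (show n - N0 < n + 1 - N0 by omega)
    omega


/-- Claim 2.6 of the paper: if some quarter `A^0_m(f*₃)` has `ρ`-value ≤ 1/4 at `c`, then
for any `m̄ < 4` and `k` there is a strictly increasing `g` fixing `0,…,k-1` with
`ρ(χ_{A^0_{m̄}(f* ∘ g)})(c) ≥ 3/4`. -/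
theorem exists_reindexing_large (ρ : (I01 → ℝ) → (I01 → ℝ))
    (hρ : IsLinearLifting (volume : Measure I01) ρ)
    (c : I01) (hc0 : 0 < (c : ℝ)) (hc1 : (c : ℝ) < 1)
    (hone : ∀ x y : ℝ, 0 ≤ x → x < (c : ℝ) → (c : ℝ) < y → y ≤ 1 →
      ρ (chi (intOO x y)) c = 1)
    (b : Fin 2 → ℕ → ℚ)
    (hbmem : ∀ j n, 0 < b j n ∧ b j n < 1)
    (hb0 : StrictMono (b 0)) (hb1 : StrictAnti (b 1))
    (hb0lim : Filter.Tendsto (fun n => ((b 0 n : ℝ))) Filter.atTop (nhds (c : ℝ)))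
    (hb1lim : Filter.Tendsto (fun n => ((b 1 n : ℝ))) Filter.atTop (nhds (c : ℝ)))
    (fstar : ℕ → ℕ) (hf : StrictMono fstar)
    (hsmall : ∃ m < 4, ρ (chi (Ak b 0 m (fun ℓ => fstar (3*ℓ)))) c ≤ 1/4) :
    ∀ mbar < 4, ∀ k : ℕ, ∃ g : ℕ → ℕ, StrictMono g ∧ (∀ i < k, g i = i) ∧
      ρ (chi (Ak b 0 mbar (fstar ∘ g))) c ≥ 3/4 := by

  intro mbar hmbar k
  obtain ⟨m, hm4, hsm⟩ := hsmall
  have hblt0 : ∀ n, ((b 0 n : ℝ)) < (c:ℝ) := by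
    intro n
    have h1 : ((b 0 (n+1) : ℝ)) ≤ c := by
      refine ge_of_tendsto hb0lim ?_
      filter_upwards [Filter.eventually_ge_atTop (n+1)] with t ht
      exact_mod_cast hb0.monotone ht
    have h2 : ((b 0 n : ℝ)) < ((b 0 (n+1) : ℝ)) := by
      exact_mod_cast hb0 (Nat.lt_succ_self n)
    linarith
  have hbgt1 : ∀ n, (c:ℝ) < ((b 1 n : ℝ)) := by
    intro n
    have h1 : (c:ℝ) ≤ ((b 1 (n+1) : ℝ)) := by
      refine le_of_tendsto hb1lim ?_
      filter_upwards [Filter.eventually_ge_atTop (n+1)] with t ht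
      exact_mod_cast hb1.antitone ht
    have h2 : ((b 1 (n+1) : ℝ)) < ((b 1 n : ℝ)) := by
      exact_mod_cast hb1 (Nat.lt_succ_self n)
    linarith
  set N0 := 4*k + mbar with hN0
  set base := 12*N0 + 3*m + 3 with hbase
  set g := gfun N0 base with hg
  have hgmono : StrictMono g := gfun_strictMono N0 base (by omega)
  have hgfix : ∀ i < k, g i = i := by
    intro i hi; rw [hg]; unfold gfun; rw [if_pos (by omega)]
  have hgval1 : ∀ s, g (4*(k+s)+mbar) = 12*(N0+s)+3*m+3 := by
    intro s
    have h1 : 4*(k+s)+mbar = N0 + 4*s := by omega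
    rw [hg, h1]; unfold gfun; rw [if_neg (by omega)]
    have h2 : N0 + 4*s - N0 = 4*s := by omega
    rw [h2, gseq_4]; omega
  have hgval2 : ∀ s, g (4*(k+s)+mbar+1) = 12*(N0+s)+3*m+12 := by
    intro s
    have h1 : 4*(k+s)+mbar+1 = N0 + (4*s+1) := by omega
    rw [hg, h1]; unfold gfun; rw [if_neg (by omega)]
    have h2 : N0 + (4*s+1) - N0 = 4*s+1 := by omega
    rw [h2, gseq_41]; omega
  refine ⟨g, hgmono, hgfix, ?_⟩
  set f3 : ℕ → ℕ := fun ℓ => fstar (3*ℓ) with hf3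
  set e0 : ℕ → ℝ := fun n => ((b 0 (fstar (3*n)) : ℝ)) with he0
  set e1 : ℕ → ℝ := fun n => -((b 1 (fstar (3*n)) : ℝ)) with he1
  have h3mono : StrictMono (fun n => 3*n) := strictMono_nat_of_lt_succ (fun n => by omega)
  have hfs3 : StrictMono (fun n => fstar (3*n)) := hf.comp h3mono
  have he0mono : StrictMono e0 := by
    intro a1 a2 h12
    show ((b 0 (fstar (3*a1)) : ℝ)) < ((b 0 (fstar (3*a2)) : ℝ))
    exact_mod_cast hb0 (hfs3 h12)
  have he1mono : StrictMono e1 := by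
    intro a1 a2 h12
    show -((b 1 (fstar (3*a1)) : ℝ)) < -((b 1 (fstar (3*a2)) : ℝ))
    have : ((b 1 (fstar (3*a2)) : ℝ)) < ((b 1 (fstar (3*a1)) : ℝ)) :=
      by exact_mod_cast hb1 (hfs3 h12)
    linarith
  have he0lim : Filter.Tendsto e0 Filter.atTop (nhds (c:ℝ)) :=
    hb0lim.comp hfs3.tendsto_atTop
  have he1lim : Filter.Tendsto e1 Filter.atTop (nhds (-(c:ℝ))) :=
    (hb1lim.comp hfs3.tendsto_atTop).neg
  set nbar := 4*N0 + m with hnbar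
  set A := Ak b 0 m f3 with hA
  set B := Ak b 0 mbar (fstar ∘ g) with hB
  set N := intOO (e0 nbar) (-(e1 nbar)) with hNdef
  set E : Set I01 := {x : I01 | (x:ℝ) = c ∨ ∃ j : Fin 2, ∃ n : ℕ, ((b j n : ℝ)) = x} with hE
  have hEc : E.Countable := by
    have h1 : E ⊆ insert c (⋃ (j : Fin 2), ⋃ (n : ℕ), {x : I01 | ((b j n : ℝ)) = (x:ℝ)}) := by
      intro x hx
      rcases hx with h | ⟨j, n, h⟩
      · exact Set.mem_insert_iff.2 (Or.inl (Subtype.ext h))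
      · exact Set.mem_insert_iff.2 (Or.inr (Set.mem_iUnion.2 ⟨j, Set.mem_iUnion.2 ⟨n, h⟩⟩))
    refine Set.Countable.mono h1 ?_
    refine Set.Countable.insert c ?_
    refine Set.countable_iUnion fun j => Set.countable_iUnion fun n => ?_
    refine Set.Subsingleton.countable ?_
    intro x hx y hy
    refine Subtype.ext ?_
    have hx' : ((b j n : ℝ)) = (x:ℝ) := hx
    have hy' : ((b j n : ℝ)) = (y:ℝ) := hy
    rw [← hx', ← hy']
  have hcov : ∀ x : I01, x ∉ E → x ∈ N → x ∈ A ∪ B := by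
    intro x hxE hxN
    obtain ⟨hxl, hxr⟩ := hxN
    have hxc : (x:ℝ) ≠ c := fun h => hxE (Or.inl h)
    have hxb : ∀ (j : Fin 2) (n : ℕ), ((b j n : ℝ)) ≠ (x:ℝ) := fun j n h => hxE (Or.inr ⟨j, n, h⟩)
    rcases lt_or_gt_of_ne hxc with hlt | hgt
    · -- x to the left of c : j = 0
      obtain ⟨n, hn, h1, h2⟩ := exists_sandwich e0 he0mono c x he0lim
        (fun n => hxb 0 (fstar (3*n))) nbar hxl hlt
      obtain ⟨s, r, hr4, hnsr⟩ : ∃ s r, r < 4 ∧ n = 4*(N0+s)+m+r :=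
        ⟨(n-nbar)/4, (n-nbar)%4, by omega, by omega⟩
      by_cases hr0 : r = 0
      · left
        refine Set.mem_iUnion.2 ⟨0, Set.mem_iUnion.2 ⟨N0+s, Set.mem_iUnion.2 ⟨Nat.zero_le _, ?_⟩⟩⟩
        show (x:ℝ) ∈ Set.uIoo ((b 0 (f3 (4*(N0+s)+m)) : ℝ)) ((b 0 (f3 (4*(N0+s)+m+1)) : ℝ))
        have hn4 : n = 4*(N0+s)+m := by omega
        have hA1 : e0 (4*(N0+s)+m) < (x:ℝ) := by rw [← hn4]; exact h1
        have hA2 : (x:ℝ) < e0 (4*(N0+s)+m+1) := by rw [← hn4]; exact h2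
        exact Set.mem_uIoo_of_lt hA1 hA2
      · right
        refine Set.mem_iUnion.2 ⟨0, Set.mem_iUnion.2 ⟨k+s, Set.mem_iUnion.2 ⟨Nat.zero_le _, ?_⟩⟩⟩
        show (x:ℝ) ∈ Set.uIoo ((b 0 ((fstar ∘ g) (4*(k+s)+mbar)) : ℝ))
          ((b 0 ((fstar ∘ g) (4*(k+s)+mbar+1)) : ℝ))
        have hc1 : (fstar ∘ g) (4*(k+s)+mbar) = fstar (3*(4*(N0+s)+m+1)) := by
          show fstar (g (4*(k+s)+mbar)) = _
          rw [hgval1 s]; congr 1; ring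
        have hc2 : (fstar ∘ g) (4*(k+s)+mbar+1) = fstar (3*(4*(N0+s)+m+4)) := by
          show fstar (g (4*(k+s)+mbar+1)) = _
          rw [hgval2 s]; congr 1; ring
        rw [hc1, hc2]
        have hB1 : e0 (4*(N0+s)+m+1) ≤ e0 n := he0mono.monotone (by omega)
        have hB2 : e0 (n+1) ≤ e0 (4*(N0+s)+m+4) := he0mono.monotone (by omega)
        exact Set.mem_uIoo_of_lt (lt_of_le_of_lt hB1 h1) (lt_of_lt_of_le h2 hB2)
    · -- x to the right of c : j = 1
      obtain ⟨n, hn, h1, h2⟩ := exists_sandwich e1 he1mono (-(c:ℝ)) (-(x:ℝ)) he1lim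
        (fun n h => hxb 1 (fstar (3*n)) (by
          have := neg_injective h; exact this)) nbar (by
          show e1 nbar < -(x:ℝ); have : (x:ℝ) < -(e1 nbar) := hxr; linarith) (by linarith)
      obtain ⟨s, r, hr4, hnsr⟩ : ∃ s r, r < 4 ∧ n = 4*(N0+s)+m+r :=
        ⟨(n-nbar)/4, (n-nbar)%4, by omega, by omega⟩
      have hval : ∀ t, e1 t = -((b 1 (fstar (3*t)) : ℝ)) := fun t => rfl
      by_cases hr0 : r = 0
      · left
        refine Set.mem_iUnion.2 ⟨1, Set.mem_iUnion.2 ⟨N0+s, Set.mem_iUnion.2 ⟨Nat.zero_le _, ?_⟩⟩⟩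
        show (x:ℝ) ∈ Set.uIoo ((b 1 (f3 (4*(N0+s)+m)) : ℝ)) ((b 1 (f3 (4*(N0+s)+m+1)) : ℝ))
        have hn4 : n = 4*(N0+s)+m := by omega
        have hA1 : e1 (4*(N0+s)+m) < -(x:ℝ) := by rw [← hn4]; exact h1
        have hA2 : -(x:ℝ) < e1 (4*(N0+s)+m+1) := by rw [← hn4]; exact h2
        rw [hval] at hA1 hA2
        refine Set.mem_uIoo_of_gt (by linarith) (by linarith)
      · right
        refine Set.mem_iUnion.2 ⟨1, Set.mem_iUnion.2 ⟨k+s, Set.mem_iUnion.2 ⟨Nat.zero_le _, ?_⟩⟩⟩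
        show (x:ℝ) ∈ Set.uIoo ((b 1 ((fstar ∘ g) (4*(k+s)+mbar)) : ℝ))
          ((b 1 ((fstar ∘ g) (4*(k+s)+mbar+1)) : ℝ))
        have hc1 : (fstar ∘ g) (4*(k+s)+mbar) = fstar (3*(4*(N0+s)+m+1)) := by
          show fstar (g (4*(k+s)+mbar)) = _
          rw [hgval1 s]; congr 1; ring
        have hc2 : (fstar ∘ g) (4*(k+s)+mbar+1) = fstar (3*(4*(N0+s)+m+4)) := by
          show fstar (g (4*(k+s)+mbar+1)) = _
          rw [hgval2 s]; congr 1; ring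
        rw [hc1, hc2]
        have hB1 : e1 (4*(N0+s)+m+1) ≤ e1 n := he1mono.monotone (by omega)
        have hB2 : e1 (n+1) ≤ e1 (4*(N0+s)+m+4) := he1mono.monotone (by omega)
        have hq1 : e1 (4*(N0+s)+m+1) < -(x:ℝ) := lt_of_le_of_lt hB1 h1
        have hq2 : -(x:ℝ) < e1 (4*(N0+s)+m+4) := lt_of_lt_of_le h2 hB2
        rw [hval] at hq1 hq2
        refine Set.mem_uIoo_of_gt (by linarith) (by linarith)
  -- measure-theoretic conclusion
  have hAmeas : MeasurableSet A := measurableSet_Ak b 0 m f3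
  have hBmeas : MeasurableSet B := measurableSet_Ak b 0 mbar (fstar ∘ g)
  have hchiA := memLinf_chi hAmeas
  have hchiB := memLinf_chi hBmeas
  have hchiN := memLinf_chi (measurableSet_intOO (e0 nbar) (-(e1 nbar)))
  have hsum : MemLinf (fun t => (1:ℝ) * chi A t + 1 * chi B t) := by
    refine ⟨(measurable_const.mul hchiA.1).add (measurable_const.mul hchiB.1), 2, fun y => ?_⟩
    have h1 := chi_nonneg A y; have h2 := chi_nonneg B y
    have h3 := chi_le_one A y; have h4 := chi_le_one B y
    rw [abs_le]; constructor <;> · simp only [one_mul]; linarith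
  have hEnull : (volume : Measure I01) E = 0 := null_of_countable hEc
  have hae : ∀ᵐ x ∂(volume : Measure I01), x ∉ E := by
    rw [← MeasureTheory.measure_eq_zero_iff_ae_notMem]; exact hEnull
  have hle : ∀ᵐ x ∂(volume : Measure I01), chi N x ≤ (1:ℝ) * chi A x + 1 * chi B x := by
    filter_upwards [hae] with x hx
    by_cases hxN : x ∈ N
    · rcases hcov x hx hxN with hA' | hB'
      · have hA1 : chi A x = 1 := by simp [chi, Set.indicator, hA']
        have := chi_nonneg B x
        have := chi_le_one N x
        simp only [one_mul]; linarith
      · have hB1 : chi B x = 1 := by simp [chi, Set.indicator, hB']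
        have := chi_nonneg A x
        have := chi_le_one N x
        simp only [one_mul]; linarith
    · have hN0' : chi N x = 0 := by simp [chi, Set.indicator, hxN]
      have := chi_nonneg A x
      have := chi_nonneg B x
      simp only [one_mul]; linarith
  have hmono := rho_mono hρ (chi N) _ hchiN hsum hle c
  rw [hρ.linear (chi A) (chi B) hchiA hchiB 1 1] at hmono
  simp only [one_mul] at hmono
  have hN1 : ρ (chi N) c = 1 := by
    refine hone (e0 nbar) (-(e1 nbar)) ?_ (hblt0 _) ?_ ?_
    · have := (hbmem 0 (fstar (3*nbar))).1
      show (0:ℝ) ≤ ((b 0 (fstar (3*nbar)) : ℝ))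
      exact_mod_cast this.le
    · show (c:ℝ) < -(-((b 1 (fstar (3*nbar)) : ℝ)))
      rw [neg_neg]; exact hbgt1 _
    · show -(-((b 1 (fstar (3*nbar)) : ℝ))) ≤ 1
      rw [neg_neg]
      exact_mod_cast (hbmem 1 (fstar (3*nbar))).2.le
  rw [hN1] at hmono
  linarith
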